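/- Properties of the stream function for odd nonnegative data (Lemma on G): Let g : [−π/4,π/4] → ℝ be continuous and odd with g ≥ 0 on [0,π/4], and let G be the unique odd C² function on [−π/4,π/4] satisfying G'' + 4G = g and G(±π/4) = 0. Then: (1) G ≤ 0 on [0,π/4]; (2) G'' ≥ g on [0,π/4]; (3) for all θ ∈ [0,π/4], G'(θ) = sin(2θ) ∫₀^θ g(θ') sin(2θ') dθ' − cos(2θ) ∫_θ^{π/4} g(θ') cos(2θ') dθ'. -/

import Mathlib

open Set Real intervalIntegral
open scoped Real

noncomputable section

/-- The interval `[-π/4, π/4]`. -/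
def I14 : Set ℝ := Icc (-(π/4)) (π/4)

/-- **Properties of the stream function for odd nonnegative data (Lemma 4.2).** If `g` is
continuous, odd, and nonnegative on `[0,π/4]`, and `G` is the unique odd `C²` solution of
`G'' + 4G = g`, `G(±π/4) = 0`, then on `[0,π/4]`: (1) `G ≤ 0`; (2) `G'' ≥ g`; and (3)
`G'(θ) = sin(2θ) ∫₀^θ g sin(2θ')dθ' - cos(2θ) ∫_θ^{π/4} g cos(2θ')dθ'`. -/
theorem stream_function_properties
    (g G : ℝ → ℝ)
    (hg : ContinuousOn g I14)
    (hgodd : ∀ θ ∈ I14, g (-θ) = - g θ)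
    (hgpos : ∀ θ ∈ Icc (0:ℝ) (π/4), 0 ≤ g θ)
    (hGodd : ∀ θ ∈ I14, G (-θ) = - G θ)
    (hGC2 : ContDiffOn ℝ 2 G I14)
    (hGeq : ∀ θ ∈ I14, iteratedDerivWithin 2 G I14 θ + 4 * G θ = g θ)
    (hbc₁ : G (π/4) = 0) (hbc₂ : G (-(π/4)) = 0) :
    (∀ θ ∈ Icc (0:ℝ) (π/4), G θ ≤ 0) ∧
    (∀ θ ∈ Icc (0:ℝ) (π/4), g θ ≤ iteratedDerivWithin 2 G I14 θ) ∧
    (∀ θ ∈ Icc (0:ℝ) (π/4),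
      derivWithin G I14 θ =
        Real.sin (2*θ) * (∫ θ' in (0:ℝ)..θ, g θ' * Real.sin (2*θ')) -
          Real.cos (2*θ) * (∫ θ' in θ..(π/4), g θ' * Real.cos (2*θ'))) := by

  have hπ : (0:ℝ) < π/4 := by positivity
  have hsub : Icc (0:ℝ) (π/4) ⊆ I14 := by
    intro x hx; exact ⟨by linarith [hx.1], hx.2⟩
  have hu : UniqueDiffOn ℝ I14 := uniqueDiffOn_Icc (by linarith)
  set D := derivWithin G I14 with hDdef
  have hGdiff : DifferentiableOn ℝ G I14 := hGC2.differentiableOn (by norm_num)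
  have hDC1 : ContDiffOn ℝ 1 D I14 := hGC2.derivWithin hu (by norm_num)
  have hDdiff : DifferentiableOn ℝ D I14 := hDC1.differentiableOn one_ne_zero
  have hDcont : ContinuousOn D I14 := hDC1.continuousOn
  set G2 := derivWithin D I14 with hG2def
  have hG2eq : ∀ θ ∈ I14, iteratedDerivWithin 2 G I14 θ = G2 θ := by
    intro θ hθ
    have h1 : ∀ x ∈ I14, iteratedDerivWithin 1 G I14 x = D x := fun x hx =>
      congrFun iteratedDerivWithin_one x
    rw [show (2:ℕ) = 1 + 1 from rfl, iteratedDerivWithin_succ]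
    exact derivWithin_congr h1 (h1 θ hθ)
  have hnhds : ∀ x ∈ Ioo (-(π/4)) (π/4), I14 ∈ nhds x := fun x hx => Icc_mem_nhds hx.1 hx.2
  have hG' : ∀ x ∈ Ioo (-(π/4)) (π/4), HasDerivAt G (D x) x := fun x hx =>
    ((hGdiff x (Ioo_subset_Icc_self hx)).hasDerivWithinAt).hasDerivAt (hnhds x hx)
  have hD' : ∀ x ∈ Ioo (-(π/4)) (π/4), HasDerivAt D (G2 x) x := fun x hx =>
    ((hDdiff x (Ioo_subset_Icc_self hx)).hasDerivWithinAt).hasDerivAt (hnhds x hx)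
  have h2t : ∀ x : ℝ, HasDerivAt (fun t : ℝ => 2*t) 2 x := by
    intro x; simpa using (hasDerivAt_id x).const_mul (2:ℝ)
  have hsin : ∀ x : ℝ, HasDerivAt (fun t => Real.sin (2*t)) (2 * Real.cos (2*x)) x := by
    intro x
    have h := (Real.hasDerivAt_sin (2*x)).comp x (h2t x)
    rw [mul_comm] at h
    exact h
  have hcos : ∀ x : ℝ, HasDerivAt (fun t => 2 * Real.cos (2*t)) (-(4 * Real.sin (2*x))) x := by
    intro x
    have := ((Real.hasDerivAt_cos (2*x)).comp x (h2t x)).const_mul (2:ℝ)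
    exact this.congr_deriv (by ring)
  have hcos1 : ∀ x : ℝ, HasDerivAt (fun t => Real.cos (2*t)) (-(2 * Real.sin (2*x))) x := by
    intro x
    have := (Real.hasDerivAt_cos (2*x)).comp x (h2t x)
    exact this.congr_deriv (by ring)
  have hsin2 : ∀ x : ℝ, HasDerivAt (fun t => 2 * Real.sin (2*t)) (4 * Real.cos (2*x)) x := by
    intro x
    have := (hsin x).const_mul (2:ℝ)
    exact this.congr_deriv (by ring)
  set H := fun t => Real.sin (2*t) * D t - 2 * Real.cos (2*t) * G t with hHdef
  set F := fun t => Real.cos (2*t) * D t + 2 * Real.sin (2*t) * G t with hFdef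
  have hsinc : Continuous fun t : ℝ => Real.sin (2*t) :=
    Real.continuous_sin.comp (continuous_const.mul continuous_id)
  have hcosc : Continuous fun t : ℝ => Real.cos (2*t) :=
    Real.continuous_cos.comp (continuous_const.mul continuous_id)
  have hHc : ContinuousOn H I14 :=
    (hsinc.continuousOn.mul hDcont).sub
      ((continuous_const.mul hcosc).continuousOn.mul hGC2.continuousOn)
  have hFc : ContinuousOn F I14 :=
    (hcosc.continuousOn.mul hDcont).add
      ((continuous_const.mul hsinc).continuousOn.mul hGC2.continuousOn)
  have hH' : ∀ x ∈ Ioo (-(π/4)) (π/4), HasDerivAt H (g x * Real.sin (2*x)) x := by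
    intro x hx
    have hxI : x ∈ I14 := Ioo_subset_Icc_self hx
    have hge : G2 x + 4 * G x = g x := by rw [← hG2eq x hxI]; exact hGeq x hxI
    have key := ((hsin x).mul (hD' x hx)).sub ((hcos x).mul (hG' x hx))
    have hval : g x * Real.sin (2*x) =
        (2 * Real.cos (2*x) * D x + Real.sin (2*x) * G2 x) -
          (-(4 * Real.sin (2*x)) * G x + 2 * Real.cos (2*x) * D x) := by
      linear_combination (-(Real.sin (2*x))) * hge
    rw [hval]; exact key
  have hF' : ∀ x ∈ Ioo (-(π/4)) (π/4), HasDerivAt F (g x * Real.cos (2*x)) x := by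
    intro x hx
    have hxI : x ∈ I14 := Ioo_subset_Icc_self hx
    have hge : G2 x + 4 * G x = g x := by rw [← hG2eq x hxI]; exact hGeq x hxI
    have key := ((hcos1 x).mul (hD' x hx)).add ((hsin2 x).mul (hG' x hx))
    have hval : g x * Real.cos (2*x) =
        (-(2 * Real.sin (2*x)) * D x + Real.cos (2*x) * G2 x) +
          (4 * Real.cos (2*x) * G x + 2 * Real.sin (2*x) * D x) := by
      linear_combination (-(Real.cos (2*x))) * hge
    rw [hval]; exact key
  have hG0 : G 0 = 0 := by
    have := hGodd 0 ⟨by linarith, by linarith⟩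
    simp at this
    linarith
  have hH0 : H 0 = 0 := by
    simp [hHdef, hG0]
  have hFend : F (π/4) = 0 := by
    have h2 : 2 * (π/4) = π/2 := by ring
    simp [hFdef, h2, Real.cos_pi_div_two, Real.sin_pi_div_two, hbc₁]
  have hHint : ∀ θ ∈ Icc (0:ℝ) (π/4),
      (∫ t in (0:ℝ)..θ, g t * Real.sin (2*t)) = H θ := by
    intro θ hθ
    have hIccsub : Icc (0:ℝ) θ ⊆ I14 := fun x hx => hsub ⟨hx.1, hx.2.trans hθ.2⟩
    have := intervalIntegral.integral_eq_sub_of_hasDeriv_right_of_le hθ.1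
      (hHc.mono hIccsub)
      (fun x hx => (hH' x ⟨by linarith [hx.1], by linarith [hx.2, hθ.2]⟩).hasDerivWithinAt)
      (((hg.mono hIccsub).mul (hsinc.continuousOn.mono hIccsub)).intervalIntegrable_of_Icc hθ.1)
    rw [this, hH0, sub_zero]
  have hFint : ∀ θ ∈ Icc (0:ℝ) (π/4),
      (∫ t in θ..(π/4), g t * Real.cos (2*t)) = - F θ := by
    intro θ hθ
    have hIccsub : Icc θ (π/4) ⊆ I14 := fun x hx => hsub ⟨hθ.1.trans hx.1, hx.2⟩
    have := intervalIntegral.integral_eq_sub_of_hasDeriv_right_of_le hθ.2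
      (hFc.mono hIccsub)
      (fun x hx => (hF' x ⟨by linarith [hx.1, hθ.1], hx.2⟩).hasDerivWithinAt)
      (((hg.mono hIccsub).mul (hcosc.continuousOn.mono hIccsub)).intervalIntegrable_of_Icc hθ.2)
    rw [this, hFend, zero_sub]
  have hA : ∀ θ ∈ Icc (0:ℝ) (π/4), 0 ≤ ∫ t in (0:ℝ)..θ, g t * Real.sin (2*t) := by
    intro θ hθ
    apply intervalIntegral.integral_nonneg hθ.1
    intro u hu
    have hu' : u ∈ Icc (0:ℝ) (π/4) := ⟨hu.1, hu.2.trans hθ.2⟩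
    have hπ' := Real.pi_pos
    exact mul_nonneg (hgpos u hu')
      (Real.sin_nonneg_of_nonneg_of_le_pi (by linarith [hu'.1]) (by linarith [hu'.2]))
  have hB : ∀ θ ∈ Icc (0:ℝ) (π/4), 0 ≤ ∫ t in θ..(π/4), g t * Real.cos (2*t) := by
    intro θ hθ
    apply intervalIntegral.integral_nonneg hθ.2
    intro u hu
    have hu' : u ∈ Icc (0:ℝ) (π/4) := ⟨hθ.1.trans hu.1, hu.2⟩
    exact mul_nonneg (hgpos u hu')
      (Real.cos_nonneg_of_mem_Icc ⟨by linarith [hu'.1, Real.pi_pos], by linarith [hu'.2]⟩)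
  have main : ∀ θ ∈ Icc (0:ℝ) (π/4), G θ ≤ 0 ∧
      D θ = Real.sin (2*θ) * (∫ t in (0:ℝ)..θ, g t * Real.sin (2*t)) -
        Real.cos (2*θ) * (∫ t in θ..(π/4), g t * Real.cos (2*t)) := by
    intro θ hθ
    have eq1 : (∫ t in (0:ℝ)..θ, g t * Real.sin (2*t)) =
        Real.sin (2*θ) * D θ - 2 * Real.cos (2*θ) * G θ := hHint θ hθ
    have eq2 : (∫ t in θ..(π/4), g t * Real.cos (2*t)) =
        -(Real.cos (2*θ) * D θ + 2 * Real.sin (2*θ) * G θ) := hFint θ hθ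
    have hsc : Real.sin (2*θ)^2 + Real.cos (2*θ)^2 = 1 := Real.sin_sq_add_cos_sq (2*θ)
    have hs : 0 ≤ Real.sin (2*θ) :=
      Real.sin_nonneg_of_nonneg_of_le_pi (by linarith [hθ.1]) (by linarith [hθ.2, Real.pi_pos])
    have hc : 0 ≤ Real.cos (2*θ) :=
      Real.cos_nonneg_of_mem_Icc ⟨by linarith [hθ.1, Real.pi_pos], by linarith [hθ.2]⟩
    have hA' := hA θ hθ
    have hB' := hB θ hθ
    constructor
    · nlinarith [mul_nonneg hc hA', mul_nonneg hs hB',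
        mul_le_mul_of_nonneg_left (le_of_eq eq1.symm) hc]
    · linear_combination (-(Real.sin (2*θ))) * eq1 + Real.cos (2*θ) * eq2 - D θ * hsc
  refine ⟨fun θ hθ => (main θ hθ).1, ?_, ?_⟩
  · intro θ hθ
    have h1 := hGeq θ (hsub hθ)
    have h2 := (main θ hθ).1
    linarith
  · intro θ hθ
    exact (main θ hθ).2
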